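/- arXiv:2007.08841 — 8 statements merged into one kernel-verified Lean document; each statement's English description precedes it below -/
import Mathlib

section
/- Let (λ_n) be a strictly increasing real sequence with gaps at least d > 0, and let (c_n) be absolutely summable complex numbers with ε := Σ_n |c_n| satisfying ε(1 + 2/d) < 1. Then the function F(z) = 1 + Σ_n c_n/(λ_n − z) has no zeros in the set of z ∈ ℂ with |z − λ_n| ≥ d/2 for all n. -/
theorem F_no_zeros (lam : ℤ → ℝ) (d : ℝ) (hd : 0 < d)
    (hmono : StrictMono lam) (hgap : ∀ n : ℤ, d ≤ lam (n + 1) - lam n)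
    (c : ℤ → ℂ) (hc : Summable fun n => ‖c n‖)
    (ε : ℝ) (hε : ε = ∑' n : ℤ, ‖c n‖) (hsmall : ε * (1 + 2 / d) < 1) :
    ∀ z : ℂ, (∀ n : ℤ, d / 2 ≤ ‖z - (lam n : ℂ)‖) →
      1 + ∑' n : ℤ, c n / ((lam n : ℂ) - z) ≠ 0 := by
  intro z hz h
  have hε0 : 0 ≤ ε := hε ▸ tsum_nonneg (fun n => norm_nonneg _)
  have hd2 : (0:ℝ) < d / 2 := by linarith
  have hterm : ∀ n : ℤ, ‖c n / ((lam n : ℂ) - z)‖ ≤ ‖c n‖ * (2 / d) := by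
    intro n
    have hnz : d / 2 ≤ ‖(lam n : ℂ) - z‖ := by
      rw [← norm_neg]; simpa [neg_sub] using hz n
    rw [norm_div]
    rw [div_le_iff₀ (lt_of_lt_of_le hd2 hnz)]
    calc ‖c n‖ = ‖c n‖ * (2 / d) * (d / 2) := by field_simp
    _ ≤ ‖c n‖ * (2 / d) * ‖(lam n : ℂ) - z‖ := by
        apply mul_le_mul_of_nonneg_left hnz
        positivity
  have hsum2 : Summable fun n : ℤ => ‖c n‖ * (2 / d) := hc.mul_right _
  have hsum1 : Summable fun n : ℤ => ‖c n / ((lam n : ℂ) - z)‖ :=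
    Summable.of_nonneg_of_le (fun n => norm_nonneg _) hterm hsum2
  have hbound : ‖∑' n : ℤ, c n / ((lam n : ℂ) - z)‖ ≤ ε * (2 / d) := by
    calc ‖∑' n : ℤ, c n / ((lam n : ℂ) - z)‖
        ≤ ∑' n : ℤ, ‖c n / ((lam n : ℂ) - z)‖ := norm_tsum_le_tsum_norm hsum1
      _ ≤ ∑' n : ℤ, ‖c n‖ * (2 / d) := Summable.tsum_le_tsum hterm hsum1 hsum2
      _ = ε * (2 / d) := by rw [hε, tsum_mul_right]
  have heq : ∑' n : ℤ, c n / ((lam n : ℂ) - z) = -1 := by linear_combination h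
  rw [heq] at hbound
  simp only [norm_neg, norm_one] at hbound
  have : ε * (2 / d) < 1 := by
    have : ε * (1 + 2 / d) = ε + ε * (2 / d) := by ring
    nlinarith
  linarith
end

section
/- Let (λ_n) be real with pairwise distances at least d > 0 and (c_n) absolutely summable with Σ_n |c_n| < ε, where ε(1 + 4/d) < 1. Fix an index k. Then for every z on the circle |z − λ_k| = d/2, one has |1 + c_k/(λ_k − z)| > |Σ_{n≠k} c_n/(λ_n − z)|. -/
theorem rouche_inequality_on_circle (lam : ℤ → ℝ) (d : ℝ) (hd : 0 < d)
    (hgap : ∀ m n : ℤ, m ≠ n → d ≤ |lam m - lam n|)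
    (c : ℤ → ℂ) (hc : Summable fun n => ‖c n‖)
    (ε : ℝ) (hcε : ∑' n : ℤ, ‖c n‖ < ε) (hsmall : ε * (1 + 4 / d) < 1)
    (k : ℤ) (z : ℂ) (hz : ‖z - (lam k : ℂ)‖ = d / 2) :
    ‖(1 : ℂ) + c k / ((lam k : ℂ) - z)‖ >
      ‖∑' n : {n : ℤ // n ≠ k}, c n / ((lam (n : ℤ) : ℂ) - z)‖ := by
  have hr : (0:ℝ) < d / 2 := by linarith
  have hzk : ‖(lam k : ℂ) - z‖ = d / 2 := by rw [norm_sub_rev]; exact hz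
  -- lower bound on distances for n ≠ k
  have hdist : ∀ n : ℤ, n ≠ k → d / 2 ≤ ‖(lam n : ℂ) - z‖ := by
    intro n hn
    have h1 : ‖((lam n : ℂ)) - (lam k : ℂ)‖ = |lam n - lam k| := by
      rw [← Complex.ofReal_sub, Complex.norm_real, Real.norm_eq_abs]
    have h2 : d ≤ ‖((lam n : ℂ)) - (lam k : ℂ)‖ := h1 ▸ hgap n k hn
    have h3 : ‖((lam n : ℂ)) - (lam k : ℂ)‖ ≤ ‖(lam n : ℂ) - z‖ + ‖z - (lam k : ℂ)‖ :=
      norm_sub_le_norm_sub_add_norm_sub _ _ _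
    rw [hz] at h3; linarith
  -- norm bound for terms
  have hterm : ∀ n : {n : ℤ // n ≠ k},
      ‖c (n : ℤ) / ((lam (n : ℤ) : ℂ) - z)‖ ≤ ‖c (n : ℤ)‖ * (2 / d) := by
    intro n
    rw [norm_div]
    have hpos : (0:ℝ) < ‖(lam (n:ℤ) : ℂ) - z‖ := lt_of_lt_of_le hr (hdist _ n.2)
    rw [div_le_iff₀ hpos]
    have hub := hdist _ n.2
    have hck : 0 ≤ ‖c (n:ℤ)‖ := norm_nonneg _
    have h1 : (1:ℝ) ≤ 2 / d * ‖(lam (n:ℤ) : ℂ) - z‖ := by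
      rw [div_mul_eq_mul_div, le_div_iff₀ hd]
      linarith
    calc ‖c (n:ℤ)‖ = ‖c (n:ℤ)‖ * 1 := (mul_one _).symm
      _ ≤ ‖c (n:ℤ)‖ * (2 / d * ‖(lam (n:ℤ) : ℂ) - z‖) := by
          exact mul_le_mul_of_nonneg_left h1 hck
      _ = ‖c (n:ℤ)‖ * (2 / d) * ‖(lam (n:ℤ) : ℂ) - z‖ := by ring
  have hsub : Summable fun n : {n : ℤ // n ≠ k} => ‖c (n : ℤ)‖ := hc.subtype _
  have hgsum : Summable fun n : {n : ℤ // n ≠ k} => c (n : ℤ) / ((lam (n : ℤ) : ℂ) - z) :=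
    Summable.of_norm_bounded (hsub.mul_right (2/d)) hterm
  set S := ∑' n : {n : ℤ // n ≠ k}, ‖c (n : ℤ)‖ with hS
  have hSnn : 0 ≤ S := tsum_nonneg fun _ => norm_nonneg _
  -- RHS bound
  have hRHS : ‖∑' n : {n : ℤ // n ≠ k}, c (n : ℤ) / ((lam (n : ℤ) : ℂ) - z)‖ ≤ S * (2/d) := by
    calc ‖∑' n : {n : ℤ // n ≠ k}, c (n : ℤ) / ((lam (n : ℤ) : ℂ) - z)‖
        ≤ ∑' n : {n : ℤ // n ≠ k}, ‖c (n : ℤ) / ((lam (n : ℤ) : ℂ) - z)‖ :=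
          norm_tsum_le_tsum_norm (hgsum.norm)
      _ ≤ ∑' n : {n : ℤ // n ≠ k}, ‖c (n : ℤ)‖ * (2/d) :=
          Summable.tsum_le_tsum hterm hgsum.norm (hsub.mul_right _)
      _ = S * (2/d) := tsum_mul_right
  -- split total sum
  have hsplit : ‖c k‖ + S ≤ ∑' n : ℤ, ‖c n‖ := by
    have h := Summable.sum_add_tsum_compl (s := ({k} : Finset ℤ)) hc
    rw [Finset.sum_singleton] at h
    have heq : (∑' n : ((({k} : Finset ℤ) : Set ℤ)ᶜ : Set ℤ), ‖c (n : ℤ)‖) = S := by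
      rw [hS]
      exact tsum_congr_set_coe (fun n : ℤ => ‖c n‖)
        (t := {n : ℤ | n ≠ k}) (by ext n; simp)
    rw [heq] at h
    exact h.le
  -- LHS bound
  have hLHS : 1 - ‖c k‖ * (2/d) ≤ ‖(1 : ℂ) + c k / ((lam k : ℂ) - z)‖ := by
    have h1 : ‖c k / ((lam k : ℂ) - z)‖ = ‖c k‖ * (2/d) := by
      rw [norm_div, hzk]
      field_simp
    have h2 := norm_sub_norm_le (1 : ℂ) (-(c k / ((lam k : ℂ) - z)))
    simp only [norm_one, norm_neg, sub_neg_eq_add] at h2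
    rw [h1] at h2
    linarith
  -- arithmetic finish
  have hT : (0:ℝ) ≤ ∑' n : ℤ, ‖c n‖ := tsum_nonneg fun _ => norm_nonneg _
  have hε : 0 < ε := lt_of_le_of_lt hT hcε
  have hckS : ‖c k‖ + S < ε := lt_of_le_of_lt hsplit hcε
  have h2d : (0:ℝ) < 2 / d := by positivity
  have hmul : (‖c k‖ + S) * (2/d) < ε * (2/d) := mul_lt_mul_of_pos_right hckS h2d
  have h4 : ε * (4/d) < 1 := by nlinarith
  have h5 : ε * (2/d) < 1 := by
    have he : ε * (2/d) = ε * (4/d) / 2 := by ring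
    have h6 : 0 ≤ ε * (4/d) := by positivity
    rw [he]; linarith
  have key : ‖c k‖ * (2/d) + S * (2/d) < 1 := by
    have := lt_trans hmul h5
    rw [add_mul] at this
    exact this
  linarith
end

section
/- Let (λ_n)_{n∈ℤ} be a strictly increasing real sequence with gaps at least d > 0 and let (ν_n)_{n∈ℤ} be complex numbers with Σ_n |ν_n − λ_n| < ∞. Then for each ε ∈ (0, d/2), the infinite product Π_n (ν_n − z)/(λ_n − z) converges uniformly on the set R(ε) = { z : |z − λ_n| ≥ ε for all n }. -/
open Filter

private lemma norm_prod_one_add_sub_one_le (t : Finset ℤ) (a : ℤ → ℂ) :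
    ‖∏ i ∈ t, (1 + a i) - 1‖ ≤ ∏ i ∈ t, (1 + ‖a i‖) - 1 := by
  classical
  induction t using Finset.induction_on with
  | empty => simp
  | insert _ _ hj ih =>
    rename_i j t
    have hP : ‖∏ i ∈ t, (1 + a i)‖ ≤ ∏ i ∈ t, (1 + ‖a i‖) := by
      rw [norm_prod]
      refine Finset.prod_le_prod (fun i _ => norm_nonneg _) (fun i _ => ?_)
      calc ‖(1 : ℂ) + a i‖ ≤ ‖(1 : ℂ)‖ + ‖a i‖ := norm_add_le _ _
        _ = 1 + ‖a i‖ := by rw [norm_one]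
    rw [Finset.prod_insert hj, Finset.prod_insert hj]
    have key : (1 + a j) * ∏ i ∈ t, (1 + a i) - 1
        = (∏ i ∈ t, (1 + a i) - 1) + a j * ∏ i ∈ t, (1 + a i) := by ring
    rw [key]
    calc ‖(∏ i ∈ t, (1 + a i) - 1) + a j * ∏ i ∈ t, (1 + a i)‖
        ≤ ‖∏ i ∈ t, (1 + a i) - 1‖ + ‖a j * ∏ i ∈ t, (1 + a i)‖ := norm_add_le _ _
      _ ≤ (∏ i ∈ t, (1 + ‖a i‖) - 1) + ‖a j‖ * ∏ i ∈ t, (1 + ‖a i‖) := by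
          rw [norm_mul]
          exact add_le_add ih (mul_le_mul_of_nonneg_left hP (norm_nonneg _))
      _ = (1 + ‖a j‖) * ∏ i ∈ t, (1 + ‖a i‖) - 1 := by ring

theorem product_tendstoUniformlyOn (lam : ℤ → ℝ) (d : ℝ) (hd : 0 < d)
    (hmono : StrictMono lam) (hgap : ∀ n : ℤ, d ≤ lam (n + 1) - lam n)
    (ν : ℤ → ℂ) (hν : Summable fun n => ‖ν n - (lam n : ℂ)‖)
    (ε : ℝ) (hε : ε ∈ Set.Ioo 0 (d / 2)) :
    TendstoUniformlyOn
      (fun (s : Finset ℤ) (z : ℂ) => ∏ n ∈ s, (ν n - z) / ((lam n : ℂ) - z))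
      (fun z : ℂ => ∏' n : ℤ, (ν n - z) / ((lam n : ℂ) - z))
      atTop
      {z : ℂ | ∀ n : ℤ, ε ≤ ‖z - (lam n : ℂ)‖} := by
  classical
  obtain ⟨hε0, -⟩ := hε
  set S : Set ℂ := {z : ℂ | ∀ n : ℤ, ε ≤ ‖z - (lam n : ℂ)‖} with hS
  set f : ℤ → ℂ → ℂ := fun n z => (ν n - z) / ((lam n : ℂ) - z) with hf
  set u : ℤ → ℝ := fun n => ‖ν n - (lam n : ℂ)‖ / ε with hu
  have hu0 : ∀ n, 0 ≤ u n := fun n => div_nonneg (norm_nonneg _) hε0.le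
  have huS : Summable u := hν.div_const ε
  set U : ℝ := ∑' n, u n with hU
  -- basic estimates on S
  have hden : ∀ z ∈ S, ∀ n : ℤ, ε ≤ ‖(lam n : ℂ) - z‖ := by
    intro z hz n
    rw [← norm_neg]; simpa using hz n
  have hne : ∀ z ∈ S, ∀ n : ℤ, (lam n : ℂ) - z ≠ 0 := by
    intro z hz n h
    have := hden z hz n
    rw [h, norm_zero] at this
    linarith
  -- f n z = 1 + g n z with ‖g n z‖ ≤ u n
  have hfg : ∀ z ∈ S, ∀ n : ℤ, f n z = 1 + (ν n - (lam n : ℂ)) / ((lam n : ℂ) - z) := by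
    intro z hz n
    simp only [hf]
    rw [div_eq_iff (hne z hz n), add_mul, div_mul_cancel₀ _ (hne z hz n)]
    ring
  have hgbd : ∀ z ∈ S, ∀ n : ℤ, ‖(ν n - (lam n : ℂ)) / ((lam n : ℂ) - z)‖ ≤ u n := by
    intro z hz n
    rw [norm_div, hu]
    exact div_le_div_of_nonneg_left (norm_nonneg _) hε0 (hden z hz n)
  -- bound on finite products
  have hprod_bd : ∀ z ∈ S, ∀ t : Finset ℤ, ‖∏ n ∈ t, f n z‖ ≤ Real.exp U := by
    intro z hz t
    rw [norm_prod]
    calc ∏ n ∈ t, ‖f n z‖ ≤ ∏ n ∈ t, Real.exp (u n) := by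
          refine Finset.prod_le_prod (fun n _ => norm_nonneg _) (fun n _ => ?_)
          rw [hfg z hz n]
          calc ‖1 + (ν n - (lam n : ℂ)) / ((lam n : ℂ) - z)‖
              ≤ ‖(1 : ℂ)‖ + ‖(ν n - (lam n : ℂ)) / ((lam n : ℂ) - z)‖ := norm_add_le _ _
            _ ≤ 1 + u n := by rw [norm_one]; linarith [hgbd z hz n]
            _ ≤ Real.exp (u n) := by linarith [Real.add_one_le_exp (u n)]
      _ = Real.exp (∑ n ∈ t, u n) := (Real.exp_sum t u).symm
      _ ≤ Real.exp U := Real.exp_le_exp.mpr (Summable.sum_le_tsum t (fun n _ => hu0 n) huS)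
  -- tail product bound
  have htail : ∀ z ∈ S, ∀ t : Finset ℤ,
      ‖∏ n ∈ t, f n z - 1‖ ≤ Real.exp (∑ n ∈ t, u n) - 1 := by
    intro z hz t
    have h1 : ∏ n ∈ t, f n z = ∏ n ∈ t, (1 + (ν n - (lam n : ℂ)) / ((lam n : ℂ) - z)) :=
      Finset.prod_congr rfl (fun n _ => hfg z hz n)
    rw [h1]
    refine (norm_prod_one_add_sub_one_le t _).trans ?_
    have h2 : ∏ n ∈ t, (1 + ‖(ν n - (lam n : ℂ)) / ((lam n : ℂ) - z)‖)
        ≤ Real.exp (∑ n ∈ t, u n) := by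
      calc ∏ n ∈ t, (1 + ‖(ν n - (lam n : ℂ)) / ((lam n : ℂ) - z)‖)
          ≤ ∏ n ∈ t, Real.exp (u n) := by
            refine Finset.prod_le_prod (fun n _ => by positivity) (fun n _ => ?_)
            calc 1 + ‖(ν n - (lam n : ℂ)) / ((lam n : ℂ) - z)‖ ≤ 1 + u n := by
                  linarith [hgbd z hz n]
              _ ≤ Real.exp (u n) := by linarith [Real.add_one_le_exp (u n)]
        _ = Real.exp (∑ n ∈ t, u n) := (Real.exp_sum t u).symm
    linarith
  -- the uniform Cauchy estimate
  have hCauchy : ∀ δ > (0 : ℝ), ∃ N : Finset ℤ, ∀ m ≥ N, ∀ n ≥ N, ∀ z ∈ S,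
      dist (∏ k ∈ m, f k z) (∏ k ∈ n, f k z) < δ := by
    intro δ hδ
    set η : ℝ := Real.log (1 + δ / (2 * (Real.exp U + 1))) with hη
    have hEpos : (0:ℝ) < Real.exp U + 1 := by positivity
    have hηpos : 0 < η := Real.log_pos (by
      have : 0 < δ / (2 * (Real.exp U + 1)) := by positivity
      linarith)
    have hexpη : Real.exp η = 1 + δ / (2 * (Real.exp U + 1)) := by
      rw [hη, Real.exp_log]
      positivity
    obtain ⟨N, hN⟩ := huS.vanishing (Metric.ball_mem_nhds (0:ℝ) hηpos)
    refine ⟨N, fun m hm n hn z hz => ?_⟩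
    have key : ∀ m : Finset ℤ, N ⊆ m → dist (∏ k ∈ m, f k z) (∏ k ∈ N, f k z)
        ≤ Real.exp U * (Real.exp η - 1) := by
      intro m hm
      have hsplit : ∏ k ∈ m, f k z = (∏ k ∈ N, f k z) * ∏ k ∈ m \ N, f k z := by
        rw [← Finset.prod_union (Finset.disjoint_sdiff), Finset.union_sdiff_of_subset hm]
      rw [dist_eq_norm, hsplit]
      have heq : (∏ k ∈ N, f k z) * (∏ k ∈ m \ N, f k z) - ∏ k ∈ N, f k z
          = (∏ k ∈ N, f k z) * ((∏ k ∈ m \ N, f k z) - 1) := by ring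
      rw [heq, norm_mul]
      have hsum : ∑ k ∈ m \ N, u k < η := by
        have := hN (m \ N) (Finset.sdiff_disjoint)
        rw [Metric.mem_ball, dist_zero_right, Real.norm_eq_abs] at this
        exact (le_abs_self _).trans_lt this
      have h1 : ‖(∏ k ∈ m \ N, f k z) - 1‖ ≤ Real.exp η - 1 := by
        refine (htail z hz _).trans ?_
        have := Real.exp_le_exp.mpr hsum.le
        linarith
      have h2 : (0:ℝ) ≤ Real.exp η - 1 := by
        have := Real.one_le_exp hηpos.le; linarith
      exact mul_le_mul (hprod_bd z hz N) h1 (norm_nonneg _) (Real.exp_pos U).le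
    have hhalf : Real.exp U * (Real.exp η - 1) < δ / 2 := by
      rw [hexpη]
      have : Real.exp U * (1 + δ / (2 * (Real.exp U + 1)) - 1)
          = Real.exp U * δ / (2 * (Real.exp U + 1)) := by ring
      rw [this, div_lt_iff₀ (by positivity)]
      nlinarith [Real.exp_pos U]
    have ha := key m hm
    have hb := key n hn
    have htri := dist_triangle (∏ k ∈ m, f k z) (∏ k ∈ N, f k z) (∏ k ∈ n, f k z)
    rw [dist_comm (∏ k ∈ N, f k z)] at htri
    linarith
  -- uniform Cauchy
  have hUC : UniformCauchySeqOn (fun (s : Finset ℤ) z => ∏ n ∈ s, f n z) atTop S :=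
    Metric.uniformCauchySeqOn_iff.mpr hCauchy
  -- pointwise convergence to tprod
  refine hUC.tendstoUniformlyOn_of_tendsto (fun z hz => ?_)
  have hcs : CauchySeq (fun s : Finset ℤ => ∏ n ∈ s, f n z) := by
    rw [Metric.cauchySeq_iff]
    intro δ hδ
    obtain ⟨N, hN⟩ := hCauchy δ hδ
    exact ⟨N, fun m hm n hn => hN m hm n hn z hz⟩
  obtain ⟨a, ha⟩ := cauchySeq_tendsto_of_complete hcs
  have hM : Multipliable (fun n => f n z) := ⟨a, ha⟩
  exact hM.hasProd
end

section
/- Under the assumptions Σ_n |ν_n − λ_n| < ∞ and gaps of (λ_n) bounded below by d > 0, the function F̃(z) = Π_n (ν_n − z)/(λ_n − z) satisfies F̃(iu) → 1 as u → +∞. -/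
open Filter

theorem tildeF_tendsto_one (lam : ℤ → ℝ) (d : ℝ) (hd : 0 < d)
    (hmono : StrictMono lam) (hgap : ∀ n : ℤ, d ≤ lam (n + 1) - lam n)
    (ν : ℤ → ℂ) (hν : Summable fun n => ‖ν n - (lam n : ℂ)‖) :
    Tendsto
      (fun u : ℝ => ∏' n : ℤ, (ν n - u * Complex.I) / ((lam n : ℂ) - u * Complex.I))
      atTop (nhds 1) := by
  set S := ∑' n : ℤ, ‖ν n - (lam n : ℂ)‖ with hSdef
  have hS0 : 0 ≤ S := tsum_nonneg fun n => norm_nonneg _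
  set g : ℝ → ℂ := fun u =>
    ∑' n : ℤ, Complex.log ((ν n - u * Complex.I) / ((lam n : ℂ) - u * Complex.I)) with hgdef
  have key : ∀ u : ℝ, 2 * S + 1 ≤ u →
      (∏' n : ℤ, (ν n - u * Complex.I) / ((lam n : ℂ) - u * Complex.I)) = Complex.exp (g u)
      ∧ ‖g u‖ ≤ 3 / 2 * S / u := by
    intro u hu
    have hu0 : (0 : ℝ) < u := by linarith
    have hden : ∀ n : ℤ, ((lam n : ℂ) - u * Complex.I) ≠ 0 := by
      intro n h
      have h2 : ((lam n : ℂ) - u * Complex.I).im = 0 := by rw [h]; simp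
      simp [Complex.sub_im, Complex.mul_im] at h2
      linarith
    have hdennorm : ∀ n : ℤ, u ≤ ‖(lam n : ℂ) - u * Complex.I‖ := by
      intro n
      have h1 : |((lam n : ℂ) - u * Complex.I).im| ≤ ‖(lam n : ℂ) - u * Complex.I‖ :=
        Complex.abs_im_le_norm _
      have h2 : ((lam n : ℂ) - u * Complex.I).im = -u := by
        simp [Complex.sub_im, Complex.mul_im]
      rw [h2, abs_neg, abs_of_pos hu0] at h1
      simpa using h1
    set a : ℤ → ℂ := fun n => (ν n - (lam n : ℂ)) / ((lam n : ℂ) - u * Complex.I) with hadef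
    have hfa : ∀ n, (ν n - u * Complex.I) / ((lam n : ℂ) - u * Complex.I) = 1 + a n := by
      intro n
      simp only [hadef]
      field_simp [hden n]
      ring
    have ha : ∀ n, ‖a n‖ ≤ ‖ν n - (lam n : ℂ)‖ / u := by
      intro n
      rw [hadef]
      simp only [norm_div]
      gcongr
      exact hdennorm n
    have hterm : ∀ n, ‖ν n - (lam n : ℂ)‖ ≤ S := fun n =>
      Summable.le_tsum hν n fun m _ => norm_nonneg _
    have hSu : S / u ≤ 1 / 2 := by
      rw [div_le_iff₀ hu0]; linarith
    have hhalf : ∀ n, ‖a n‖ ≤ 1 / 2 := by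
      intro n
      refine ((ha n).trans ?_).trans hSu
      gcongr
      exact hterm n
    have hne : ∀ n, (ν n - u * Complex.I) / ((lam n : ℂ) - u * Complex.I) ≠ 0 := by
      intro n h
      rw [hfa n] at h
      have ha1 : a n = -1 := by linear_combination h
      have := hhalf n
      rw [ha1] at this
      norm_num at this
    have hlogb : ∀ n, ‖Complex.log ((ν n - u * Complex.I) / ((lam n : ℂ) - u * Complex.I))‖ ≤
        3 / 2 / u * ‖ν n - (lam n : ℂ)‖ := by
      intro n
      rw [hfa n]
      refine (Complex.norm_log_one_add_half_le_self (hhalf n)).trans ?_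
      have := ha n
      have h3 : (3:ℝ)/2 * ‖a n‖ ≤ 3/2 * (‖ν n - (lam n : ℂ)‖ / u) := by gcongr
      calc (3:ℝ)/2 * ‖a n‖ ≤ 3/2 * (‖ν n - (lam n : ℂ)‖ / u) := h3
        _ = 3 / 2 / u * ‖ν n - (lam n : ℂ)‖ := by ring
    have hbsum : Summable fun n : ℤ => 3 / 2 / u * ‖ν n - (lam n : ℂ)‖ := hν.mul_left _
    have hnormsum : Summable fun n : ℤ =>
        ‖Complex.log ((ν n - u * Complex.I) / ((lam n : ℂ) - u * Complex.I))‖ :=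
      Summable.of_nonneg_of_le (fun n => norm_nonneg _) hlogb hbsum
    have hsumlog : Summable fun n : ℤ =>
        Complex.log ((ν n - u * Complex.I) / ((lam n : ℂ) - u * Complex.I)) :=
      hnormsum.of_norm
    constructor
    · have hp := hsumlog.hasSum.cexp
      have hfun : (Complex.exp ∘ fun n : ℤ =>
          Complex.log ((ν n - u * Complex.I) / ((lam n : ℂ) - u * Complex.I))) =
          fun n : ℤ => (ν n - u * Complex.I) / ((lam n : ℂ) - u * Complex.I) :=
        funext fun n => Complex.exp_log (hne n)
      rw [hfun] at hp
      exact hp.tprod_eq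
    · calc ‖g u‖ ≤ ∑' n : ℤ,
            ‖Complex.log ((ν n - u * Complex.I) / ((lam n : ℂ) - u * Complex.I))‖ :=
          norm_tsum_le_tsum_norm hnormsum
        _ ≤ ∑' n : ℤ, 3 / 2 / u * ‖ν n - (lam n : ℂ)‖ := Summable.tsum_le_tsum hlogb hnormsum hbsum
        _ = 3 / 2 / u * S := tsum_mul_left
        _ = 3 / 2 * S / u := by ring
  have htend0 : Tendsto (fun u : ℝ => 3 / 2 * S / u) atTop (nhds 0) := by
    have := tendsto_inv_atTop_zero.const_mul (3 / 2 * S)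
    simpa [div_eq_mul_inv] using this
  have hg0 : Tendsto g atTop (nhds 0) := by
    apply squeeze_zero_norm' _ htend0
    filter_upwards [eventually_ge_atTop (2 * S + 1)] with u hu
    exact (key u hu).2
  have hexp : Tendsto (fun u : ℝ => Complex.exp (g u)) atTop (nhds 1) := by
    have := (Complex.continuous_exp.tendsto 0).comp hg0
    simpa [Function.comp_def] using this
  refine hexp.congr' ?_
  filter_upwards [eventually_ge_atTop (2 * S + 1)] with u hu
  exact ((key u hu).1).symm
end

section
/- Let (λ_n) be a strictly increasing real sequence with gaps at least d > 0 and (ν_n) complex with S := Σ_n |ν_n − λ_n| < ∞. Then for every n, the partial-product sequence Π_{m≠n} |(ν_m − λ_n)/(λ_m − λ_n)| is bounded above by exp(S/d), uniformly in n. -/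
theorem partial_products_bounded (lam : ℤ → ℝ) (d : ℝ) (hd : 0 < d)
    (hmono : StrictMono lam) (hgap : ∀ m n : ℤ, m ≠ n → d ≤ |lam m - lam n|)
    (ν : ℤ → ℂ) (S : ℝ) (hS : HasSum (fun n => ‖ν n - (lam n : ℂ)‖) S) :
    ∀ n : ℤ, ∀ s : Finset ℤ, n ∉ s →
      ∏ m ∈ s, ‖(ν m - (lam n : ℂ)) / ((lam m : ℂ) - (lam n : ℂ))‖ ≤
        Real.exp (S / d) := by
  intro n s hns
  have key : ∀ m ∈ s, ‖(ν m - (lam n : ℂ)) / ((lam m : ℂ) - (lam n : ℂ))‖ ≤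
      Real.exp (‖ν m - (lam m : ℂ)‖ / d) := by
    intro m hm
    have hmn : m ≠ n := fun h => hns (h ▸ hm)
    set b : ℂ := (lam m : ℂ) - (lam n : ℂ) with hbdef
    have hb : d ≤ ‖b‖ := by
      have h1 : b = ((lam m - lam n : ℝ) : ℂ) := by push_cast; ring
      rw [h1, Complex.norm_real]
      exact hgap m n hmn
    have hbpos : 0 < ‖b‖ := lt_of_lt_of_le hd hb
    have h1 : ‖ν m - (lam n : ℂ)‖ ≤ ‖ν m - (lam m : ℂ)‖ + ‖b‖ := by
      have := norm_add_le (ν m - (lam m : ℂ)) b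
      simpa [hbdef, sub_add_sub_cancel] using this
    rw [norm_div]
    have h2 : ‖ν m - (lam n : ℂ)‖ / ‖b‖ ≤ ‖ν m - (lam m : ℂ)‖ / d + 1 := by
      rw [div_le_iff₀ hbpos]
      calc ‖ν m - (lam n : ℂ)‖ ≤ ‖ν m - (lam m : ℂ)‖ + ‖b‖ := h1
        _ ≤ ‖ν m - (lam m : ℂ)‖ / d * ‖b‖ + 1 * ‖b‖ := by
            have : ‖ν m - (lam m : ℂ)‖ ≤ ‖ν m - (lam m : ℂ)‖ / d * ‖b‖ := by
              rw [div_mul_eq_mul_div, le_div_iff₀ hd]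
              exact mul_le_mul_of_nonneg_left hb (norm_nonneg _)
            linarith
        _ = (‖ν m - (lam m : ℂ)‖ / d + 1) * ‖b‖ := by ring
    calc ‖ν m - (lam n : ℂ)‖ / ‖b‖ ≤ ‖ν m - (lam m : ℂ)‖ / d + 1 := h2
      _ ≤ Real.exp (‖ν m - (lam m : ℂ)‖ / d) := by
          have := Real.add_one_le_exp (‖ν m - (lam m : ℂ)‖ / d)
          linarith
  calc ∏ m ∈ s, ‖(ν m - (lam n : ℂ)) / ((lam m : ℂ) - (lam n : ℂ))‖
      ≤ ∏ m ∈ s, Real.exp (‖ν m - (lam m : ℂ)‖ / d) :=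
        Finset.prod_le_prod (fun m _ => norm_nonneg _) key
    _ = Real.exp (∑ m ∈ s, ‖ν m - (lam m : ℂ)‖ / d) := (Real.exp_sum s _).symm
    _ ≤ Real.exp (S / d) := by
        apply Real.exp_le_exp.mpr
        rw [← Finset.sum_div]
        gcongr
        exact sum_le_hasSum s (fun m _ => norm_nonneg _) hS
end

section
/- Let (λ_n) have gaps at least d > 0 and Σ_n |ν_n − λ_n| < ∞. Define c_n := (λ_n − ν_n) · Π_{m≠n} (ν_m − λ_n)/(λ_m − λ_n). Then Σ_n |c_n| < ∞. -/
set_option maxHeartbeats 1000000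


theorem residues_summable (lam : ℤ → ℝ) (d : ℝ) (hd : 0 < d)
    (hmono : StrictMono lam) (hgap : ∀ m n : ℤ, m ≠ n → d ≤ |lam m - lam n|)
    (ν : ℤ → ℂ) (hν : Summable fun n => ‖ν n - (lam n : ℂ)‖)
    (c : ℤ → ℂ)
    (hc : ∀ n : ℤ, c n = ((lam n : ℂ) - ν n) *
      ∏' m : {m : ℤ // m ≠ n}, (ν (m : ℤ) - (lam n : ℂ)) / ((lam (m : ℤ) : ℂ) - (lam n : ℂ))) :
    Summable fun n => ‖c n‖ := by
  set a : ℤ → ℝ := fun m => ‖ν m - (lam m : ℂ)‖ with ha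
  set S : ℝ := ∑' m, a m with hS
  have hS0 : 0 ≤ S := tsum_nonneg fun m => norm_nonneg _
  set C : ℝ := Real.exp (S / d) with hC
  have hC1 : (1 : ℝ) ≤ C := by
    rw [hC]
    exact Real.one_le_exp (by positivity)
  -- key bound on the products
  have key : ∀ n : ℤ,
      ‖∏' m : {m : ℤ // m ≠ n}, (ν (m : ℤ) - (lam n : ℂ)) / ((lam (m : ℤ) : ℂ) - (lam n : ℂ))‖
        ≤ C := by
    intro n
    set f : {m : ℤ // m ≠ n} → ℂ :=
      fun m => (ν (m : ℤ) - (lam n : ℂ)) / ((lam (m : ℤ) : ℂ) - (lam n : ℂ)) with hf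
    have hbound : ∀ m : {m : ℤ // m ≠ n}, ‖f m‖ ≤ Real.exp (a (m : ℤ) / d) := by
      intro m
      have hDd : d ≤ ‖((lam (m : ℤ) : ℂ)) - (lam n : ℂ)‖ := by
        have : ((lam (m : ℤ) : ℂ)) - (lam n : ℂ) = ((lam (m : ℤ) - lam n : ℝ) : ℂ) := by
          push_cast; ring
        rw [this, Complex.norm_real, Real.norm_eq_abs]
        exact hgap _ _ m.2
      have hD0 : 0 < ‖((lam (m : ℤ) : ℂ)) - (lam n : ℂ)‖ := lt_of_lt_of_le hd hDd
      have hnum : ‖ν (m : ℤ) - (lam n : ℂ)‖ ≤ a (m : ℤ) + ‖((lam (m : ℤ) : ℂ)) - (lam n : ℂ)‖ := by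
        calc ‖ν (m : ℤ) - (lam n : ℂ)‖
            = ‖(ν (m : ℤ) - (lam (m : ℤ) : ℂ)) + (((lam (m : ℤ) : ℂ)) - (lam n : ℂ))‖ := by
              ring_nf
          _ ≤ _ := norm_add_le _ _
      have h1 : ‖f m‖ ≤ 1 + a (m : ℤ) / d := by
        rw [hf]
        simp only [norm_div]
        rw [div_le_iff₀ hD0]
        have ha0 : 0 ≤ a (m : ℤ) := norm_nonneg _
        calc ‖ν (m : ℤ) - (lam n : ℂ)‖
            ≤ a (m : ℤ) + ‖((lam (m : ℤ) : ℂ)) - (lam n : ℂ)‖ := hnum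
          _ ≤ (1 + a (m : ℤ) / d) * ‖((lam (m : ℤ) : ℂ)) - (lam n : ℂ)‖ := by
              have h2 : a (m : ℤ) ≤ a (m : ℤ) / d * ‖((lam (m : ℤ) : ℂ)) - (lam n : ℂ)‖ := by
                rw [div_mul_eq_mul_div, le_div_iff₀ hd]
                exact mul_le_mul_of_nonneg_left hDd ha0
              rw [add_mul, one_mul]
              linarith
      exact h1.trans (by
        have := Real.add_one_le_exp (a (m : ℤ) / d)
        linarith)
    by_cases hmul : Multipliable f
    · rw [hmul.norm_tprod]
      apply hasProd_le_of_prod_le hmul.norm.hasProd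
      intro s
      calc ∏ m ∈ s, ‖f m‖
          ≤ ∏ m ∈ s, Real.exp (a (m : ℤ) / d) :=
            Finset.prod_le_prod (fun m _ => norm_nonneg _) (fun m _ => hbound m)
        _ = Real.exp (∑ m ∈ s, a (m : ℤ) / d) := by rw [Real.exp_sum]
        _ ≤ C := by
            rw [hC]
            apply Real.exp_le_exp.mpr
            rw [← Finset.sum_div]
            gcongr
            calc ∑ m ∈ s, a (m : ℤ)
                = ∑ m ∈ s.map (Function.Embedding.subtype _), a m :=
                  (Finset.sum_map s (Function.Embedding.subtype _) a).symm
              _ ≤ S := Summable.sum_le_tsum _ (fun m _ => norm_nonneg _) hν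
    · rw [tprod_eq_one_of_not_multipliable hmul, norm_one]
      exact hC1
  -- conclude
  refine Summable.of_nonneg_of_le (fun n => norm_nonneg _) ?_ (hν.mul_right C)
  intro n
  rw [hc n, norm_mul]
  have h1 : ‖(lam n : ℂ) - ν n‖ = a n := norm_sub_rev _ _
  rw [h1]
  exact mul_le_mul_of_nonneg_left (key n) (norm_nonneg _)
end

section
/- The nonzero real solutions μ of the equation tan(πμ) = πμ/(μ²+1) can be enumerated as μ_n = n + ε_n, n ∈ ℤ \ {0}, where n·ε_n → 1 as |n| → ∞; in particular ε_n = n^{-1}(1+o(1)) and Σ_n |μ_n − n| diverges. -/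
open Filter Real Set Topology

noncomputable section
namespace TanEq

def g (x : ℝ) : ℝ := (x^2+1) * Real.sin (π*x) - π*x * Real.cos (π*x)

lemma g_neg (x : ℝ) : g (-x) = - g x := by
  simp [g, mul_neg, neg_mul, Real.sin_neg, Real.cos_neg]
  ring

lemma cos_ne_zero_of_g {x : ℝ} (h : g x = 0) : Real.cos (π*x) ≠ 0 := by
  intro hc
  rw [g, hc, mul_zero, sub_zero, mul_eq_zero] at h
  have hx2 : (0:ℝ) < x^2+1 := by positivity
  have hs : Real.sin (π*x) = 0 := by
    rcases h with h | h
    · linarith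
    · exact h
  have := Real.sin_sq_add_cos_sq (π*x)
  rw [hs, hc] at this
  norm_num at this

lemma equation_iff {x : ℝ} (hx : x ≠ 0) :
    Real.tan (π*x) = π*x/(x^2+1) ↔ g x = 0 := by
  have hx2 : (0:ℝ) < x^2+1 := by positivity
  constructor
  · intro h
    by_cases hc : Real.cos (π*x) = 0
    · rw [Real.tan_eq_sin_div_cos, hc, div_zero] at h
      have hpx : π*x ≠ 0 := mul_ne_zero Real.pi_ne_zero hx
      exact absurd (div_eq_zero_iff.mp h.symm) (by push_neg; exact ⟨hpx, by linarith⟩)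
    · rw [Real.tan_eq_sin_div_cos, div_eq_div_iff hc hx2.ne'] at h
      rw [g]
      linarith [h]
  · intro h
    have hc := cos_ne_zero_of_g h
    rw [Real.tan_eq_sin_div_cos, div_eq_div_iff hc hx2.ne']
    rw [g, sub_eq_zero] at h
    linarith [h]

lemma g_hasDerivAt (x : ℝ) :
    HasDerivAt g ((2*x + π^2*x) * Real.sin (π*x) + π*x^2 * Real.cos (π*x)) x := by
  have h1 : HasDerivAt (fun y : ℝ => π*y) π x := by
    simpa using (hasDerivAt_id x).const_mul π
  have hs : HasDerivAt (fun y : ℝ => Real.sin (π*y)) (Real.cos (π*x) * π) x :=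
    (Real.hasDerivAt_sin (π*x)).comp x h1
  have hc : HasDerivAt (fun y : ℝ => Real.cos (π*y)) (-Real.sin (π*x) * π) x :=
    (Real.hasDerivAt_cos (π*x)).comp x h1
  have hp : HasDerivAt (fun y : ℝ => y^2+1) (2*x) x := by
    simpa using ((hasDerivAt_pow 2 x).add_const 1)
  have := (hp.mul hs).sub (h1.mul hc)
  refine this.congr_deriv ?_
  ring

lemma g_cont : Continuous g := by
  rw [continuous_iff_continuousAt]
  exact fun x => (g_hasDerivAt x).differentiableAt.continuousAt

lemma sin_shift (n : ℤ) (x : ℝ) : Real.sin (π*x) = (-1)^n * Real.sin (π*(x - n)) := by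
  rw [show π*x = π*(x-(n:ℝ)) + (n:ℝ)*π by ring, Real.sin_add_int_mul_pi]

lemma cos_shift (n : ℤ) (x : ℝ) : Real.cos (π*x) = (-1)^n * Real.cos (π*(x - n)) := by
  rw [show π*x = π*(x-(n:ℝ)) + (n:ℝ)*π by ring, Real.cos_add_int_mul_pi]


-- value at integer n : g n = -π n (-1)^n
lemma g_int (n : ℤ) : g n = -π * n * (-1)^n := by
  rw [g, sin_shift n, cos_shift n]
  simp only [sub_self, mul_zero, Real.sin_zero, Real.cos_zero, mul_one, zero_mul]
  ring

lemma g_half (n : ℤ) : g ((n:ℝ) + 1/2) = (((n:ℝ)+1/2)^2+1) * (-1)^n := by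
  rw [g, sin_shift n, cos_shift n]
  have h1 : π * ((n:ℝ) + 1/2 - n) = π/2 := by ring
  rw [h1, Real.sin_pi_div_two, Real.cos_pi_div_two]
  ring

-- strict monotonicity of (-1)^n * g on Icc n (n+1/2), for n ≥ 1
lemma deriv_pos {n : ℤ} (hn : 1 ≤ n) {x : ℝ} (hx : x ∈ Icc (n:ℝ) ((n:ℝ)+1/2)) :
    0 < (-1)^n * ((2*x + π^2*x) * Real.sin (π*x) + π*x^2 * Real.cos (π*x)) := by
  obtain ⟨hx1, hx2⟩ := hx
  have hn1 : (1:ℝ) ≤ (n:ℝ) := by exact_mod_cast hn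
  have hx0 : (1:ℝ) ≤ x := le_trans hn1 hx1
  set t := x - (n:ℝ) with ht
  have ht0 : 0 ≤ t := by simp [ht]; linarith
  have ht2 : t ≤ 1/2 := by simp [ht]; linarith
  have hsin : 0 ≤ Real.sin (π*t) := by
    apply Real.sin_nonneg_of_nonneg_of_le_pi
    · positivity
    · nlinarith [Real.pi_pos]
  have hcos : 0 ≤ Real.cos (π*t) := by
    apply Real.cos_nonneg_of_mem_Icc
    constructor
    · nlinarith [Real.pi_pos]
    · nlinarith [Real.pi_pos]
  rw [sin_shift n, cos_shift n, ← ht]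
  have hsq : ((-1:ℝ)^n) * ((-1:ℝ)^n) = 1 := by
    rw [← zpow_add₀ (by norm_num : (-1:ℝ) ≠ 0), show n + n = 2*n by ring, zpow_mul]
    norm_num
  have hexp : (-1:ℝ)^n * ((2*x + π^2*x) * ((-1)^n * Real.sin (π*t)) + π*x^2 * ((-1)^n * Real.cos (π*t)))
      = (2*x + π^2*x) * Real.sin (π*t) + π*x^2 * Real.cos (π*t) := by
    rw [show (-1:ℝ)^n * ((2*x + π^2*x) * ((-1:ℝ)^n * Real.sin (π*t)) + π*x^2 * ((-1:ℝ)^n * Real.cos (π*t)))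
      = ((-1:ℝ)^n * (-1:ℝ)^n) * ((2*x + π^2*x) * Real.sin (π*t) + π*x^2 * Real.cos (π*t)) by ring, hsq, one_mul]
  rw [hexp]
  rcases eq_or_lt_of_le ht0 with h | h
  · have hc1 : Real.cos (π*t) = 1 := by rw [← h]; simp
    have h1 : 0 ≤ (2*x + π^2*x) * Real.sin (π*t) :=
      mul_nonneg (by nlinarith [Real.pi_pos]) hsin
    have h2 : 0 < π*x^2 := by positivity
    rw [hc1]
    linarith
  · have hsin' : 0 < Real.sin (π*t) := by
      apply Real.sin_pos_of_pos_of_lt_pi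
      · positivity
      · nlinarith [Real.pi_pos]
    have h1 : 0 < (2*x + π^2*x) * Real.sin (π*t) :=
      mul_pos (by nlinarith [Real.pi_pos]) hsin'
    have h2 : 0 ≤ π*x^2 * Real.cos (π*t) := mul_nonneg (by positivity) hcos
    linarith

lemma strictMono_G {n : ℤ} (hn : 1 ≤ n) :
    StrictMonoOn (fun x => (-1)^n * g x) (Icc (n:ℝ) ((n:ℝ)+1/2)) := by
  apply strictMonoOn_of_hasDerivWithinAt_pos (convex_Icc _ _)
    (Continuous.continuousOn (continuous_const.mul g_cont))
    (f' := fun x => (-1)^n * ((2*x + π^2*x) * Real.sin (π*x) + π*x^2 * Real.cos (π*x)))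
  · intro x hx
    exact (((g_hasDerivAt x).const_mul ((-1:ℝ)^n)).hasDerivWithinAt)
  · intro x hx
    exact deriv_pos hn (interior_subset hx)

lemma neg_one_zpow_sq (n : ℤ) : ((-1:ℝ)^n) * ((-1:ℝ)^n) = 1 := by
  rw [← zpow_add₀ (by norm_num : (-1:ℝ) ≠ 0), show n + n = 2*n by ring, zpow_mul]
  norm_num

lemma exun (n : ℤ) (hn : 1 ≤ n) :
    ∃! x : ℝ, x ∈ Ioo (n:ℝ) ((n:ℝ)+1/2) ∧ g x = 0 := by
  have hn1 : (1:ℝ) ≤ (n:ℝ) := by exact_mod_cast hn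
  have hGa : (-1:ℝ)^n * g n < 0 := by
    rw [g_int n]
    have : (-1:ℝ)^n * (-π * n * (-1)^n) = -π * n * ((-1:ℝ)^n * (-1)^n) := by ring
    rw [this, neg_one_zpow_sq]
    nlinarith [Real.pi_pos]
  have hGb : 0 < (-1:ℝ)^n * g ((n:ℝ)+1/2) := by
    rw [g_half n]
    have : (-1:ℝ)^n * ((((n:ℝ)+1/2)^2+1) * (-1)^n) = (((n:ℝ)+1/2)^2+1) * ((-1:ℝ)^n * (-1)^n) := by ring
    rw [this, neg_one_zpow_sq]
    nlinarith
  have hab : (n:ℝ) ≤ (n:ℝ)+1/2 := by linarith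
  have hcont : ContinuousOn (fun x => (-1:ℝ)^n * g x) (Icc (n:ℝ) ((n:ℝ)+1/2)) :=
    (continuous_const.mul g_cont).continuousOn
  have hIVT := intermediate_value_Ioo hab hcont
  have h0 : (0:ℝ) ∈ Ioo ((-1:ℝ)^n * g n) ((-1:ℝ)^n * g ((n:ℝ)+1/2)) := ⟨hGa, hGb⟩
  obtain ⟨x, hx, hgx⟩ := hIVT h0
  refine ⟨x, ⟨hx, ?_⟩, ?_⟩
  · have hne : ((-1:ℝ)^n) ≠ 0 := by
      intro h
      have := neg_one_zpow_sq n
      rw [h] at this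
      norm_num at this
    exact (mul_eq_zero.mp hgx).resolve_left hne
  · rintro y ⟨hy, hgy⟩
    by_contra hne
    have hmono := strictMono_G hn
    rcases lt_or_gt_of_ne hne with h | h
    · have := hmono (Ioo_subset_Icc_self hy) (Ioo_subset_Icc_self hx) h
      simp only [hgy, hgx, mul_zero] at this
      exact lt_irrefl 0 this
    · have := hmono (Ioo_subset_Icc_self hx) (Ioo_subset_Icc_self hy) h
      simp only [hgy, hgx, mul_zero] at this
      exact lt_irrefl 0 this

lemma g_pos_of_mem_Ioo01 {x : ℝ} (hx : x ∈ Ioo (0:ℝ) 1) : 0 < g x := by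
  obtain ⟨hx0, hx1⟩ := hx
  have hp := Real.pi_pos
  -- φ(t) = sin t - t * cos t is positive on (0, π)
  have hphi : 0 < Real.sin (π*x) - (π*x) * Real.cos (π*x) := by
    set f : ℝ → ℝ := fun t => Real.sin t - t * Real.cos t with hf
    have hder : ∀ t : ℝ, HasDerivAt f (t * Real.sin t) t := by
      intro t
      have h1 := (Real.hasDerivAt_sin t).sub (((hasDerivAt_id t).mul (Real.hasDerivAt_cos t)))
      refine h1.congr_deriv ?_
      simp only [id_eq]
      ring
    have hmono : StrictMonoOn f (Icc (0:ℝ) π) := by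
      apply strictMonoOn_of_hasDerivWithinAt_pos (convex_Icc _ _)
        (Continuous.continuousOn (by
          have : Continuous f := by
            rw [continuous_iff_continuousAt]
            exact fun t => (hder t).differentiableAt.continuousAt
          exact this))
        (fun t _ => (hder t).hasDerivWithinAt)
      intro t ht
      rw [interior_Icc] at ht
      exact mul_pos ht.1 (Real.sin_pos_of_pos_of_lt_pi ht.1 ht.2)
    have h0 : f 0 = 0 := by simp [hf]
    have hlt : f 0 < f (π*x) := by
      apply hmono
      · exact ⟨le_refl 0, le_of_lt hp⟩
      · constructor
        · positivity
        · nlinarith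
      · positivity
    rw [h0] at hlt
    exact hlt
  have hsin : 0 ≤ Real.sin (π*x) := by
    apply Real.sin_nonneg_of_nonneg_of_le_pi
    · positivity
    · nlinarith
  have hx2 : 0 ≤ x^2 * Real.sin (π*x) := by positivity
  rw [g]
  nlinarith

lemma classify_pos_zero {x : ℝ} (hx : 0 < x) (hgx : g x = 0) :
    ∃ n : ℤ, 1 ≤ n ∧ x ∈ Ioo (n:ℝ) ((n:ℝ)+1/2) := by
  set n : ℤ := ⌊x⌋ with hn
  have hfl : (n:ℝ) ≤ x := Int.floor_le x
  have hfl2 : x < (n:ℝ)+1 := by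
    have := Int.lt_floor_add_one x
    push_cast at this ⊢
    linarith
  have hn0 : 0 ≤ n := by
    rw [hn]
    exact Int.floor_nonneg.mpr (le_of_lt hx)
  rcases eq_or_lt_of_le hn0 with h0 | h1
  · -- n = 0, so x ∈ (0,1): contradiction
    exfalso
    rw [← h0] at hfl hfl2
    simp at hfl2
    exact absurd hgx (ne_of_gt (g_pos_of_mem_Ioo01 ⟨hx, hfl2⟩))
  · have hn1 : 1 ≤ n := h1
    refine ⟨n, hn1, ?_, ?_⟩
    · -- x ≠ n since g n ≠ 0
      rcases eq_or_lt_of_le hfl with h | h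
      · exfalso
        rw [← h] at hgx
        rw [g_int n] at hgx
        have hnr : (1:ℝ) ≤ (n:ℝ) := by exact_mod_cast hn1
        rcases mul_eq_zero.mp hgx with h3 | h3
        · rcases mul_eq_zero.mp h3 with h4 | h4
          · rw [neg_eq_zero] at h4
            exact Real.pi_ne_zero h4
          · linarith
        · have := neg_one_zpow_sq n
          rw [h3] at this
          norm_num at this
      · exact h
    · -- x < n + 1/2 : else (-1)^n g x > 0 on [n+1/2, n+1)
      by_contra hge
      push_neg at hge
      have ht : x - (n:ℝ) ∈ Icc (1/2 : ℝ) 1 := by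
        constructor
        · linarith
        · linarith
      have hp := Real.pi_pos
      have hsin : 0 < Real.sin (π*(x - n)) := by
        apply Real.sin_pos_of_pos_of_lt_pi
        · nlinarith [ht.1]
        · rcases lt_or_eq_of_le ht.2 with h | h
          · nlinarith
          · exfalso
            -- x = n + 1 : but then g x = g (n+1) ≠ 0; handle: x - n = 1 means sin = 0... 
            -- treat separately below; here derive contradiction from g value at integer n+1
            have hx1 : x = ((n+1 : ℤ):ℝ) := by push_cast; linarith
            rw [hx1, g_int (n+1)] at hgx
            have h1 : ((n:ℝ)+1) ≠ 0 := by
              have : (1:ℝ) ≤ (n:ℝ) := by exact_mod_cast hn1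
              linarith
            have h2 : ((-1:ℝ)^(n+1)) ≠ 0 := by
              intro hh
              have := neg_one_zpow_sq (n+1)
              rw [hh] at this
              norm_num at this
            have := mul_eq_zero.mp hgx
            rcases this with h3 | h3
            · rcases mul_eq_zero.mp h3 with h4 | h4
              · rw [neg_eq_zero] at h4
                exact Real.pi_ne_zero h4
              · push_cast at h4
                exact h1 h4
            · exact h2 h3
      have hcos : Real.cos (π*(x - n)) ≤ 0 := by
        apply Real.cos_nonpos_of_pi_div_two_le_of_le
        · nlinarith [ht.1]
        · nlinarith [ht.2]
      have hxpos : (1:ℝ) ≤ x := by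
        have : (1:ℝ) ≤ (n:ℝ) := by exact_mod_cast hn1
        linarith
      have hG : 0 < (x^2+1) * Real.sin (π*(x-n)) - π*x * Real.cos (π*(x-n)) := by
        have h1 : 0 < (x^2+1) * Real.sin (π*(x-n)) := by positivity
        have h2 : 0 ≤ -(π*x * Real.cos (π*(x-n))) := by
          rw [neg_nonneg]
          exact mul_nonpos_of_nonneg_of_nonpos (by positivity) hcos
        linarith
      have : g x = (-1:ℝ)^n * ((x^2+1) * Real.sin (π*(x-n)) - π*x * Real.cos (π*(x-n))) := by
        rw [g, sin_shift n x, cos_shift n x]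
        ring
      rw [this] at hgx
      rcases mul_eq_zero.mp hgx with h | h
      · have := neg_one_zpow_sq n
        rw [h] at this
        norm_num at this
      · linarith

def c (n : ℤ) : ℝ := if h : 1 ≤ n then Classical.choose (exun n h) else 0

lemma c_spec {n : ℤ} (hn : 1 ≤ n) :
    (c n ∈ Ioo (n:ℝ) ((n:ℝ)+1/2) ∧ g (c n) = 0) ∧
      ∀ y, (y ∈ Ioo (n:ℝ) ((n:ℝ)+1/2) ∧ g y = 0) → y = c n := by
  have h := Classical.choose_spec (exun n hn)
  rw [c, dif_pos hn]
  exact ⟨h.1, h.2⟩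

def μ : ℤ → ℝ := fun n => if 0 < n then c n else if n < 0 then -(c (-n)) else 0

lemma μ_of_pos {n : ℤ} (hn : 0 < n) : μ n = c n := by rw [μ, if_pos hn]

lemma μ_odd (n : ℤ) : μ (-n) = -μ n := by
  rcases lt_trichotomy n 0 with h | h | h
  · unfold μ
    rw [if_pos (show 0 < -n by omega), if_neg (show ¬ 0 < n by omega), if_pos h, neg_neg]
  · simp [h, μ]
  · unfold μ
    rw [if_neg (show ¬ 0 < -n by omega), if_pos (show -n < 0 by omega), if_pos h, neg_neg]

lemma μ_mem_pos {n : ℤ} (hn : 1 ≤ n) : μ n ∈ Ioo (n:ℝ) ((n:ℝ)+1/2) := by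
  rw [μ_of_pos hn]
  exact (c_spec hn).1.1

lemma g_μ {n : ℤ} (hn : n ≠ 0) : g (μ n) = 0 := by
  rcases lt_or_gt_of_ne hn with h | h
  · have h1 : 1 ≤ -n := by omega
    have : μ n = -(μ (-n)) := by rw [← μ_odd, neg_neg]
    rw [this, g_neg, μ_of_pos (by omega)]
    rw [(c_spec h1).1.2, neg_zero]
  · rw [μ_of_pos h]
    exact (c_spec h).1.2

lemma μ_close {n : ℤ} (hn : n ≠ 0) : μ n ∈ Ioo ((n:ℝ) - 1/2) ((n:ℝ)+1/2) := by
  rcases lt_or_gt_of_ne hn with h | h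
  · have h1 : 1 ≤ -n := by omega
    have hmem := μ_mem_pos h1
    have : μ n = -(μ (-n)) := by rw [← μ_odd, neg_neg]
    rw [this]
    obtain ⟨ha, hb⟩ := hmem
    push_cast at ha hb ⊢
    constructor <;> linarith
  · have hmem := μ_mem_pos h
    obtain ⟨ha, hb⟩ := hmem
    have : (1:ℝ) ≤ (n:ℝ) := by exact_mod_cast h
    constructor <;> linarith

lemma μ_ne_zero {n : ℤ} (hn : n ≠ 0) : μ n ≠ 0 := by
  obtain ⟨ha, hb⟩ := μ_close hn
  rcases lt_or_gt_of_ne hn with h | h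
  · have : (n:ℝ) ≤ -1 := by exact_mod_cast (by omega : n ≤ -1)
    intro h0
    rw [h0] at hb
    linarith
  · have : (1:ℝ) ≤ (n:ℝ) := by exact_mod_cast h
    intro h0
    rw [h0] at ha
    linarith

lemma μ_inj {m n : ℤ} (hm : m ≠ 0) (hn : n ≠ 0) (h : μ m = μ n) : m = n := by
  obtain ⟨ha, hb⟩ := μ_close hm
  obtain ⟨hc, hd⟩ := μ_close hn
  rw [h] at ha hb
  have h1 : (m:ℝ) < (n:ℝ) + 1 := by linarith
  have h2 : (n:ℝ) < (m:ℝ) + 1 := by linarith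
  have h3 : m < n + 1 := by exact_mod_cast h1
  have h4 : n < m + 1 := by exact_mod_cast h2
  omega

lemma μ_surj {x : ℝ} (hx : x ≠ 0) (hgx : g x = 0) : ∃ n : ℤ, n ≠ 0 ∧ μ n = x := by
  rcases lt_or_gt_of_ne hx with h | h
  · have hgx' : g (-x) = 0 := by rw [g_neg, hgx, neg_zero]
    obtain ⟨n, hn1, hmem⟩ := classify_pos_zero (by linarith) hgx'
    refine ⟨-n, by omega, ?_⟩
    rw [μ_odd, μ_of_pos (by omega), ((c_spec hn1).2 (-x) ⟨hmem, hgx'⟩).symm, neg_neg]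
  · obtain ⟨n, hn1, hmem⟩ := classify_pos_zero h hgx
    refine ⟨n, by omega, ?_⟩
    rw [μ_of_pos (by omega)]
    exact ((c_spec hn1).2 x ⟨hmem, hgx⟩).symm

lemma tan_eps {n : ℤ} (hn : 1 ≤ n) :
    Real.tan (π*(μ n - n)) = π*(μ n)/((μ n)^2+1) := by
  set m := μ n with hm
  have hg : g m = 0 := g_μ (by omega)
  obtain ⟨ha, hb⟩ := μ_mem_pos hn
  set ε := m - (n:ℝ) with hε
  have hε0 : 0 < ε := by simp [hε]; linarith
  have hε2 : ε < 1/2 := by simp [hε]; linarith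
  have hp := Real.pi_pos
  have hkey : (m^2+1) * Real.sin (π*ε) = π*m * Real.cos (π*ε) := by
    have h1 : g m = (-1:ℝ)^n * ((m^2+1) * Real.sin (π*ε) - π*m * Real.cos (π*ε)) := by
      rw [g, sin_shift n m, cos_shift n m, ← hε]
      ring
    rw [hg] at h1
    rcases mul_eq_zero.mp h1.symm with h | h
    · exfalso
      have := neg_one_zpow_sq n
      rw [h] at this
      norm_num at this
    · linarith
  have hcos : 0 < Real.cos (π*ε) := by
    apply Real.cos_pos_of_mem_Ioo
    constructor
    · nlinarith
    · nlinarith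
  rw [Real.tan_eq_sin_div_cos, div_eq_div_iff hcos.ne' (by positivity : ((m:ℝ)^2+1) ≠ 0)]
  linarith

set_option maxHeartbeats 1000000 in
lemma bound {n : ℤ} (hn : 3 ≤ n) :
    ((n:ℝ)^2/(((n:ℝ)+1/2)^2+1))*(1-π^2/(2*(n:ℝ)^2)) ≤ (n:ℝ)*(μ n - n) ∧
      (n:ℝ)*(μ n - n) < 1 := by
  have hmem := μ_mem_pos (by omega : 1 ≤ n)
  have htan := tan_eps (by omega : 1 ≤ n)
  obtain ⟨m, hmdef⟩ : ∃ m, μ n = m := ⟨_, rfl⟩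
  rw [hmdef] at hmem htan ⊢
  obtain ⟨ha, hb⟩ := hmem
  obtain ⟨ε, hε⟩ : ∃ e : ℝ, e = m - (n:ℝ) := ⟨_, rfl⟩
  rw [← hε] at htan ⊢
  have hnr : (3:ℝ) ≤ (n:ℝ) := by exact_mod_cast hn
  have hε0 : 0 < ε := by rw [hε]; linarith
  have hε2 : ε < 1/2 := by rw [hε]; linarith
  have hm3 : (3:ℝ) < m := by linarith
  have hp := Real.pi_pos
  have hπ : π < 3.15 := Real.pi_lt_d2
  -- upper bound
  have h1 : π*ε < Real.tan (π*ε) := Real.lt_tan (by positivity) (by nlinarith)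
  have hA : ε*(m^2+1) < m := by
    rw [htan] at h1
    rw [lt_div_iff₀ (by positivity : (0:ℝ) < m^2+1)] at h1
    nlinarith
  have hupper : (n:ℝ)*ε < 1 := by nlinarith [mul_pos hε0 (by nlinarith : (0:ℝ) < m - n)]
  refine ⟨?_, hupper⟩
  -- lower bound
  have hεn : ε < 1/(n:ℝ) := by
    rw [lt_div_iff₀ (by linarith : (0:ℝ) < (n:ℝ))]
    nlinarith
  have hε3 : ε < 1/3 := lt_of_lt_of_le hεn (by
    apply one_div_le_one_div_of_le
    · norm_num
    · exact hnr)
  have hπε0 : 0 < π*ε := by positivity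
  have hπε : π*ε < 1.05 := by nlinarith
  have hsq : (π*ε)^2 < 2 := by
    have h4 : (π*ε)*(π*ε) < 1.05*1.05 :=
      mul_lt_mul'' hπε hπε (le_of_lt hπε0) (le_of_lt hπε0)
    calc (π*ε)^2 = (π*ε)*(π*ε) := by ring
    _ < 1.05*1.05 := h4
    _ < 2 := by norm_num
  have hc2 : 0 < 1 - (π*ε)^2/2 := by linarith only [hsq]
  have hcosgt : 1 - (π*ε)^2/2 < Real.cos (π*ε) :=
    Real.one_sub_sq_div_two_lt_cos (by positivity)
  have hsinle : Real.sin (π*ε) ≤ π*ε := Real.sin_le (by positivity)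
  have hcos : 0 < Real.cos (π*ε) := by linarith
  have htanle : Real.tan (π*ε) ≤ π*ε/(1 - (π*ε)^2/2) := by
    rw [Real.tan_eq_sin_div_cos]
    exact div_le_div₀ (by positivity) hsinle hc2 (le_of_lt hcosgt)
  have hB : m*(1 - (π*ε)^2/2) ≤ ε*(m^2+1) := by
    rw [htan] at htanle
    rw [div_le_div_iff₀ (by positivity : (0:ℝ) < m^2+1) hc2] at htanle
    nlinarith
  -- (π ε)^2 ≤ π^2/n^2
  have hsq2 : (π*ε)^2 ≤ π^2/(n:ℝ)^2 := by
    have h2 : ε^2 ≤ 1/(n:ℝ)^2 := by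
      have h3 : ε^2 < (1/(n:ℝ))^2 := by
        apply sq_lt_sq' _ hεn
        nlinarith
      calc ε^2 ≤ (1/(n:ℝ))^2 := le_of_lt h3
      _ = 1/(n:ℝ)^2 := by rw [div_pow, one_pow]
    calc (π*ε)^2 = π^2*ε^2 := by ring
    _ ≤ π^2*(1/(n:ℝ)^2) := mul_le_mul_of_nonneg_left h2 (by positivity)
    _ = π^2/(n:ℝ)^2 := by ring
  have hD : (0:ℝ) < ((n:ℝ)+1/2)^2+1 := by positivity
  rw [div_mul_eq_mul_div, div_le_iff₀ hD]
  -- goal : n^2*(1-π^2/(2 n^2)) ≤ n*ε*((n+1/2)^2+1)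
  have hc3 : 0 < 1 - π^2/(2*(n:ℝ)^2) := by
    rw [sub_pos, div_lt_one (by positivity)]
    have h4 : π*π < 3.15*3.15 := mul_lt_mul'' hπ hπ (le_of_lt hp) (le_of_lt hp)
    nlinarith
  have step1 : (n:ℝ)^2*(1-π^2/(2*(n:ℝ)^2)) ≤ (n:ℝ)*m*(1 - (π*ε)^2/2) := by
    have e1 : (n:ℝ)^2*(1-π^2/(2*(n:ℝ)^2)) ≤ (n:ℝ)^2*(1 - (π*ε)^2/2) := by
      apply mul_le_mul_of_nonneg_left _ (by positivity)
      have : π^2/(2*(n:ℝ)^2) = (π^2/(n:ℝ)^2)/2 := by ring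
      rw [this]
      linarith
    have e2 : (n:ℝ)^2*(1 - (π*ε)^2/2) ≤ (n:ℝ)*m*(1 - (π*ε)^2/2) := by
      apply mul_le_mul_of_nonneg_right _ (by linarith : (0:ℝ) ≤ 1 - (π*ε)^2/2)
      nlinarith
    linarith
  have step2 : (n:ℝ)*m*(1 - (π*ε)^2/2) ≤ (n:ℝ)*(ε*(m^2+1)) := by
    have := mul_le_mul_of_nonneg_left hB (by linarith : (0:ℝ) ≤ (n:ℝ))
    calc (n:ℝ)*m*(1 - (π*ε)^2/2) = (n:ℝ)*(m*(1 - (π*ε)^2/2)) := by ring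
    _ ≤ (n:ℝ)*(ε*(m^2+1)) := this
  have step3 : (n:ℝ)*(ε*(m^2+1)) ≤ (n:ℝ)*ε*((((n:ℝ)+1/2))^2+1) := by
    have hnε : 0 < (n:ℝ)*ε := by positivity
    have : m^2+1 ≤ ((n:ℝ)+1/2)^2+1 := by nlinarith
    calc (n:ℝ)*(ε*(m^2+1)) = ((n:ℝ)*ε)*(m^2+1) := by ring
    _ ≤ ((n:ℝ)*ε)*(((n:ℝ)+1/2)^2+1) := mul_le_mul_of_nonneg_left this (le_of_lt hnε)
    _ = (n:ℝ)*ε*((((n:ℝ)+1/2))^2+1) := by ring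
  calc (n:ℝ)^2*(1-π^2/(2*(n:ℝ)^2)) ≤ (n:ℝ)*m*(1 - (π*ε)^2/2) := step1
  _ ≤ (n:ℝ)*(ε*(m^2+1)) := step2
  _ ≤ (n:ℝ)*ε*((((n:ℝ)+1/2))^2+1) := step3

lemma L_tendsto :
    Tendsto (fun x : ℝ => (x^2/((x+1/2)^2+1))*(1-π^2/(2*x^2))) atTop (𝓝 1) := by
  have h0 : Tendsto (fun x : ℝ => x⁻¹) atTop (𝓝 0) := tendsto_inv_atTop_zero
  have h1 : Tendsto (fun x : ℝ => (1 + x⁻¹ + (5/4)*x⁻¹^2)⁻¹ * (1 - (π^2/2)*x⁻¹^2)) atTop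
      (𝓝 (((1:ℝ) + 0 + (5/4)*(0:ℝ)^2)⁻¹ * (1 - (π^2/2)*(0:ℝ)^2))) := by
    apply Tendsto.mul
    · exact ((tendsto_const_nhds.add h0).add (tendsto_const_nhds.mul (h0.pow 2))).inv₀
        (by norm_num)
    · exact tendsto_const_nhds.sub (tendsto_const_nhds.mul (h0.pow 2))
  have h2 : ((1:ℝ) + 0 + (5/4)*(0:ℝ)^2)⁻¹ * (1 - (π^2/2)*(0:ℝ)^2) = 1 := by norm_num
  rw [h2] at h1
  apply h1.congr'
  filter_upwards [eventually_gt_atTop (0:ℝ)] with x hx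
  have hx0 : x ≠ 0 := ne_of_gt hx
  have hd : ((x:ℝ)+1/2)^2+1 ≠ 0 := by positivity
  field_simp
  ring

lemma q_atTop : Tendsto (fun n : ℤ => (n:ℝ)*(μ n - n)) atTop (𝓝 1) := by
  apply tendsto_of_tendsto_of_tendsto_of_le_of_le'
    (L_tendsto.comp (tendsto_intCast_atTop_atTop))
    (tendsto_const_nhds : Tendsto (fun _ : ℤ => (1:ℝ)) atTop (𝓝 1))
  · filter_upwards [eventually_ge_atTop (3:ℤ)] with n hn
    exact (bound hn).1
  · filter_upwards [eventually_ge_atTop (3:ℤ)] with n hn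
    exact le_of_lt (bound hn).2

lemma q_neg (n : ℤ) : (((-n:ℤ)):ℝ)*(μ (-n) - ((-n:ℤ):ℝ)) = (n:ℝ)*(μ n - n) := by
  rw [μ_odd]
  push_cast
  ring

lemma q_atBot : Tendsto (fun n : ℤ => (n:ℝ)*(μ n - n)) atBot (𝓝 1) := by
  have h := q_atTop.comp (tendsto_neg_atBot_atTop : Tendsto (fun n : ℤ => -n) atBot atTop)
  apply h.congr
  intro n
  exact q_neg n

lemma q_cofinite : Tendsto (fun n : ℤ => (n:ℝ)*(μ n - n)) cofinite (𝓝 1) := by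
  rw [Int.cofinite_eq]
  rw [tendsto_sup]
  exact ⟨q_atBot, q_atTop⟩

lemma not_summable : ¬ Summable (fun n : ℤ => |μ n - n|) := by
  intro hS
  have hev : ∀ᶠ n : ℤ in atTop, 1/2 < (n:ℝ)*(μ n - n) :=
    q_atTop.eventually (eventually_gt_nhds (by norm_num))
  obtain ⟨N, hN⟩ := eventually_atTop.mp hev
  set K : ℤ := max N 1 with hK
  have hK1 : 1 ≤ K := le_max_right N 1
  have hinj : Function.Injective (fun k : ℕ => (k:ℤ) + K) := by
    intro a b h
    simp only [add_left_inj] at h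
    exact_mod_cast h
  have h2 : Summable (fun k : ℕ => |μ ((k:ℤ) + K) - (((k:ℤ) + K : ℤ):ℝ)|) :=
    hS.comp_injective hinj
  have hbound : ∀ k : ℕ, (2*((k:ℝ) + (K:ℝ)))⁻¹ ≤ |μ ((k:ℤ) + K) - (((k:ℤ) + K : ℤ):ℝ)| := by
    intro k
    set n : ℤ := (k:ℤ) + K with hn
    have hn1 : 1 ≤ n := by omega
    have hnN : N ≤ n := by
      have := le_max_left N 1
      omega
    have hq := hN n hnN
    have hnr : (1:ℝ) ≤ (n:ℝ) := by exact_mod_cast hn1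
    have hgt : (2*(n:ℝ))⁻¹ < μ n - n := by
      rw [inv_eq_one_div, div_lt_iff₀ (by linarith : (0:ℝ) < 2*(n:ℝ))]
      nlinarith
    have hcast : ((k:ℝ) + (K:ℝ)) = (n:ℝ) := by rw [hn]; push_cast; ring
    rw [hcast]
    calc (2*(n:ℝ))⁻¹ ≤ μ n - n := le_of_lt hgt
    _ ≤ |μ n - (n:ℝ)| := le_abs_self _
  have h3 : Summable (fun k : ℕ => (2*((k:ℝ) + (K:ℝ)))⁻¹) := by
    apply Summable.of_nonneg_of_le _ hbound h2
    intro k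
    have : (1:ℝ) ≤ (K:ℝ) := by exact_mod_cast hK1
    positivity
  have h4 : Summable (fun k : ℕ => ((k:ℝ) + (K:ℝ))⁻¹) := by
    have := h3.mul_left (2:ℝ)
    apply this.congr
    intro k
    have hKr : (1:ℝ) ≤ (K:ℝ) := by exact_mod_cast hK1
    have hne : (k:ℝ) + (K:ℝ) ≠ 0 := by positivity
    field_simp
  have h5 : Summable (fun k : ℕ => ((k + K.toNat : ℕ):ℝ)⁻¹) := by
    apply h4.congr
    intro k
    congr 1
    push_cast
    have hKt : ((K.toNat : ℕ) : ℝ) = ((K:ℤ) : ℝ) := by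
      rw [← Int.cast_natCast, Int.toNat_of_nonneg (by omega : (0:ℤ) ≤ K)]
    rw [hKt]
  have h5' : Summable (fun k : ℕ => (fun n : ℕ => ((n:ℝ))⁻¹) (k + K.toNat)) := h5
  exact Real.not_summable_natCast_inv ((summable_nat_add_iff K.toNat).mp h5')

end TanEq

open Filter

theorem tan_equation_solutions_enumeration :
    ∃ μ : ℤ → ℝ,
      (∀ n : ℤ, n ≠ 0 → μ n ≠ 0 ∧
        Real.tan (Real.pi * μ n) = Real.pi * μ n / ((μ n) ^ 2 + 1)) ∧
      (∀ m n : ℤ, m ≠ 0 → n ≠ 0 → μ m = μ n → m = n) ∧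
      (∀ x : ℝ, x ≠ 0 → Real.tan (Real.pi * x) = Real.pi * x / (x ^ 2 + 1) →
        ∃ n : ℤ, n ≠ 0 ∧ μ n = x) ∧
      Tendsto (fun n : ℤ => (n : ℝ) * (μ n - n)) cofinite (nhds 1) ∧
      ¬ Summable (fun n : ℤ => |μ n - n|) := by
  refine ⟨TanEq.μ, ?_, ?_, ?_, ?_, ?_⟩
  · intro n hn
    exact ⟨TanEq.μ_ne_zero hn, (TanEq.equation_iff (TanEq.μ_ne_zero hn)).mpr (TanEq.g_μ hn)⟩
  · exact fun m n hm hn h => TanEq.μ_inj hm hn h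
  · intro x hx hxeq
    exact TanEq.μ_surj hx ((TanEq.equation_iff hx).mp hxeq)
  · exact TanEq.q_cofinite
  · exact TanEq.not_summable
end
end

section
/- Let (λ_n) be strictly increasing reals with gaps at least d, let c_n be complex with Σ|c_n| < ∞, and suppose for some index k with |c_k| < ε and ε(1+4/d) < 1 there is μ with |μ − λ_k| < d/2 satisfying 1 + Σ_n c_n/(λ_n − μ) = 0 and Σ_{n≠k} |c_n/(λ_n − μ)| < ε + 2ε/d. Then |μ − λ_k| < (d/(2ε))·|c_k|. -/
theorem eigenvalue_offset_bound (lam : ℤ → ℝ) (d : ℝ) (hd : 0 < d)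
    (hmono : StrictMono lam) (hgap : ∀ m n : ℤ, m ≠ n → d ≤ |lam m - lam n|)
    (c : ℤ → ℂ) (hc : Summable fun n => ‖c n‖)
    (ε : ℝ) (hε : 0 < ε) (hsmall : ε * (1 + 4 / d) < 1)
    (k : ℤ) (hck : ‖c k‖ < ε)
    (μ : ℂ) (hμk : ‖μ - (lam k : ℂ)‖ < d / 2)
    (hzero : 1 + ∑' n : ℤ, c n / ((lam n : ℂ) - μ) = 0)
    (htail : ∑' n : {n : ℤ // n ≠ k}, ‖c (n : ℤ) / ((lam (n : ℤ) : ℂ) - μ)‖ < ε + 2 * ε / d) :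
    ‖μ - (lam k : ℂ)‖ < d / (2 * ε) * ‖c k‖ := by
  set g : ℤ → ℂ := fun n => c n / ((lam n : ℂ) - μ) with hg
  have hd2 : (0:ℝ) < d / 2 := by linarith
  -- denominators for n ≠ k
  have hden : ∀ n : ℤ, n ≠ k → d / 2 ≤ ‖(lam n : ℂ) - μ‖ := by
    intro n hn
    have h1 : d ≤ |lam n - lam k| := hgap n k hn
    have h2 : ‖((lam n : ℝ) : ℂ) - (lam k : ℂ)‖ = |lam n - lam k| := by
      rw [← Complex.ofReal_sub, Complex.norm_real, Real.norm_eq_abs]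
    have h3 : ‖(lam n : ℂ) - (lam k : ℂ)‖ - ‖μ - (lam k:ℂ)‖ ≤ ‖(lam n : ℂ) - μ‖ := by
      have := norm_sub_norm_le ((lam n : ℂ) - (lam k : ℂ)) (μ - (lam k : ℂ))
      have e : (lam n : ℂ) - (lam k : ℂ) - (μ - (lam k : ℂ)) = (lam n : ℂ) - μ := by ring
      rwa [e] at this
    rw [h2] at h3
    linarith
  -- norm bound on tail terms
  have hbound : ∀ n : {n : ℤ // n ≠ k}, ‖g n‖ ≤ 2 / d * ‖c (n:ℤ)‖ := by
    intro ⟨n, hn⟩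
    have hden' := hden n hn
    simp only [hg, norm_div]
    rw [div_le_iff₀ (lt_of_lt_of_le hd2 hden')]
    calc ‖c n‖ = 2 / d * ‖c n‖ * (d/2) := by field_simp
      _ ≤ 2 / d * ‖c n‖ * ‖(lam n : ℂ) - μ‖ := by
          apply mul_le_mul_of_nonneg_left hden'
          positivity
  have hnsum : Summable fun n : {n : ℤ // n ≠ k} => ‖g n‖ := by
    apply Summable.of_nonneg_of_le (fun n => norm_nonneg _) hbound
    exact (hc.comp_injective Subtype.coe_injective).mul_left _
  have hsub : Summable fun n : {n : ℤ // n ≠ k} => g n := hnsum.of_norm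
  -- full summability
  have hset : ({n : ℤ | n ≠ k}ᶜ : Set ℤ) = {k} := by ext n; simp
  have hcompl : Summable fun n : ({n : ℤ | n ≠ k}ᶜ : Set ℤ) => g n := by
    rw [hset]; exact .of_finite
  have hsum : Summable g :=
    (summable_subtype_and_compl).mp ⟨hsub, hcompl⟩
  have hsplit : (∑' n : {n : ℤ // n ≠ k}, g n) + g k = ∑' n, g n := by
    have := hsum.tsum_subtype_add_tsum_subtype_compl {n : ℤ | n ≠ k}
    rw [hset] at this
    rw [tsum_singleton] at this
    exact this
  -- key: g k = -1 - T
  set T : ℂ := ∑' n : {n : ℤ // n ≠ k}, g n with hT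
  have hgk : g k = -1 - T := by
    have : (1:ℂ) + (T + g k) = 0 := by rw [hsplit]; exact hzero
    linear_combination this
  have hTn : ‖T‖ < ε + 2 * ε / d := lt_of_le_of_lt (norm_tsum_le_tsum_norm hnsum) htail
  have hgkn : 1 - (ε + 2 * ε / d) < ‖g k‖ := by
    have h1 : ‖(-1 : ℂ) - T‖ ≥ ‖(-1 : ℂ)‖ - ‖T‖ := norm_sub_norm_le _ _
    rw [hgk]
    simp only [norm_neg, norm_one] at h1
    linarith
  have hed : ε + 4 * ε / d < 1 := by
    have : ε * (1 + 4 / d) = ε + 4 * ε / d := by field_simp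
    linarith [this ▸ hsmall]
  have hkey : 2 * ε / d < ‖g k‖ := by
    have h4 : 4 * ε / d = 2 * (2 * ε / d) := by ring
    linarith
  have hpos : 0 < 2 * ε / d := by positivity
  by_cases hr : μ = (lam k : ℂ)
  · exfalso
    have : g k = 0 := by simp [hg, hr]
    rw [this, norm_zero] at hkey
    linarith
  · have hr0 : 0 < ‖μ - (lam k : ℂ)‖ := by
      rw [norm_pos_iff]; intro h; exact hr (sub_eq_zero.mp h)
    have hgke : ‖g k‖ = ‖c k‖ / ‖μ - (lam k : ℂ)‖ := by
      simp only [hg, norm_div]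
      rw [norm_sub_rev]
    rw [hgke, lt_div_iff₀ hr0] at hkey
    have hkey' : 2 * ε * ‖μ - (lam k : ℂ)‖ < ‖c k‖ * d := by
      rw [div_mul_eq_mul_div, div_lt_iff₀ hd] at hkey
      linarith
    rw [div_mul_eq_mul_div, lt_div_iff₀ (by positivity : (0:ℝ) < 2 * ε)]
    nlinarith [hkey']
end
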